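/- Let p, q be real polynomials and let x_e < 0 < x_d be real numbers with p(x_e) = p(x_d) = 0, p'(x_e) ≠ 0, p'(x_d) ≠ 0, p(x) > 0 for all x ∈ (x_e, x_d), p(x)q(x)² ≠ 1 for all x ∈ (x_e, x_d), and q'(x) ≠ 0 for all x ∈ (x_e, x_d). Let γ = (γ₁, γ₂) : ℝ → ℝ² be any T-periodic (T > 0) differentiable solution of the system ẋ = y, ẏ = ((3/2)·q(x)p'(x) + p(x)q'(x))·y − (p'(x)/2)·(p(x)q(x)² − 1) whose image is the oval Γ = {(x, y) : (y − p(x)q(x))² − p(x) = 0, x_e ≤ x ≤ x_d}. Then ∫₀ᵀ div(γ(t)) dt ≠ 0, where div(x, y) := (3/2)·q(x)p'(x) + p(x)q'(x) is the divergence of the system. Moreover, ∫₀ᵀ div(γ(t)) dt < 0 if q'(x) > 0 for all x ∈ (x_e, x_d), and ∫₀ᵀ div(γ(t)) dt > 0 if q'(x) < 0 for all x ∈ (x_e, x_d). -/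

import Mathlib

open Polynomial MeasureTheory

private lemma aux_integral_pos {g : ℝ → ℝ} (hg : Continuous g) {T t₀ : ℝ}
    (hT : 0 < T) (ht0 : 0 ≤ t₀) (ht1 : t₀ < T)
    (hnn : ∀ t, 0 ≤ g t) (hpt : 0 < g t₀) :
    0 < ∫ t in (0:ℝ)..T, g t := by
  rw [intervalIntegral.integral_pos_iff_support_of_nonneg_ae
    (Filter.Eventually.of_forall hnn) (hg.intervalIntegrable 0 T)]
  refine ⟨hT, ?_⟩
  have hopen : IsOpen {x : ℝ | 0 < g x} := isOpen_lt continuous_const hg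
  obtain ⟨ε, hε, hball⟩ := Metric.isOpen_iff.1 hopen t₀ hpt
  have hsub : Set.Ioo t₀ (min (t₀ + ε) T) ⊆ Function.support g ∩ Set.Ioc 0 T := by
    intro x hx
    have hxε : x < t₀ + ε := lt_of_lt_of_le hx.2 (min_le_left _ _)
    have hxT : x ≤ T := le_of_lt (lt_of_lt_of_le hx.2 (min_le_right _ _))
    have hb : x ∈ Metric.ball t₀ ε := by
      rw [Metric.mem_ball, Real.dist_eq, abs_lt]
      constructor <;> [linarith [hx.1]; linarith [hx.1]]
    exact ⟨ne_of_gt (hball hb), ⟨by linarith [hx.1], hxT⟩⟩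
  exact ((MeasureTheory.Measure.measure_Ioo_pos _).2
    (lt_min (by linarith) ht1)).trans_le (measure_mono hsub)

theorem integral_of_divergence_ne_zero (p q : ℝ[X]) (xe xd : ℝ)
    (hxe : xe < 0) (hxd : 0 < xd)
    (hpe : p.eval xe = 0) (hpd : p.eval xd = 0)
    (hpe' : (derivative p).eval xe ≠ 0) (hpd' : (derivative p).eval xd ≠ 0)
    (hp : ∀ x ∈ Set.Ioo xe xd, 0 < p.eval x)
    (hpq : ∀ x ∈ Set.Ioo xe xd, p.eval x * (q.eval x) ^ 2 ≠ 1)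
    (hq' : ∀ x ∈ Set.Ioo xe xd, (derivative q).eval x ≠ 0)
    (T : ℝ) (hT : 0 < T) (γ₁ γ₂ : ℝ → ℝ)
    (hper1 : ∀ t, γ₁ (t + T) = γ₁ t) (hper2 : ∀ t, γ₂ (t + T) = γ₂ t)
    (hsol1 : ∀ t, HasDerivAt γ₁ (γ₂ t) t)
    (hsol2 : ∀ t, HasDerivAt γ₂
      (((3 / 2) * q.eval (γ₁ t) * (derivative p).eval (γ₁ t)
          + p.eval (γ₁ t) * (derivative q).eval (γ₁ t)) * γ₂ t
        - ((derivative p).eval (γ₁ t) / 2)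
          * (p.eval (γ₁ t) * (q.eval (γ₁ t)) ^ 2 - 1)) t)
    (himage : Set.range (fun t => (γ₁ t, γ₂ t)) =
      {z : ℝ × ℝ | (z.2 - p.eval z.1 * q.eval z.1) ^ 2 - p.eval z.1 = 0
        ∧ xe ≤ z.1 ∧ z.1 ≤ xd}) :
    (∫ t in (0:ℝ)..T, ((3 / 2) * q.eval (γ₁ t) * (derivative p).eval (γ₁ t)
        + p.eval (γ₁ t) * (derivative q).eval (γ₁ t))) ≠ 0 ∧
    ((∀ x ∈ Set.Ioo xe xd, 0 < (derivative q).eval x) →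
      (∫ t in (0:ℝ)..T, ((3 / 2) * q.eval (γ₁ t) * (derivative p).eval (γ₁ t)
        + p.eval (γ₁ t) * (derivative q).eval (γ₁ t))) < 0) ∧
    ((∀ x ∈ Set.Ioo xe xd, (derivative q).eval x < 0) →
      0 < (∫ t in (0:ℝ)..T, ((3 / 2) * q.eval (γ₁ t) * (derivative p).eval (γ₁ t)
        + p.eval (γ₁ t) * (derivative q).eval (γ₁ t)))) := by
  have hc1 : Continuous γ₁ :=
    continuous_iff_continuousAt.2 fun t => (hsol1 t).differentiableAt.continuousAt
  have hc2 : Continuous γ₂ :=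
    continuous_iff_continuousAt.2 fun t => (hsol2 t).differentiableAt.continuousAt
  -- basic membership facts
  have hmem : ∀ t, (γ₂ t - p.eval (γ₁ t) * q.eval (γ₁ t)) ^ 2 = p.eval (γ₁ t)
      ∧ xe ≤ γ₁ t ∧ γ₁ t ≤ xd := by
    intro t
    have h : (γ₁ t, γ₂ t) ∈ {z : ℝ × ℝ | (z.2 - p.eval z.1 * q.eval z.1) ^ 2 - p.eval z.1 = 0
        ∧ xe ≤ z.1 ∧ z.1 ≤ xd} := by
      rw [← himage]; exact ⟨t, rfl⟩
    obtain ⟨h1, h2, h3⟩ := h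
    exact ⟨by linarith [h1], h2, h3⟩
  have hW2 : ∀ t, (γ₂ t - p.eval (γ₁ t) * q.eval (γ₁ t)) ^ 2 = p.eval (γ₁ t) :=
    fun t => (hmem t).1
  -- u and its properties
  set u : ℝ → ℝ := fun t => q.eval (γ₁ t) * (γ₂ t - p.eval (γ₁ t) * q.eval (γ₁ t)) with hu_def
  have hu_cont : Continuous u :=
    (q.continuous.comp hc1).mul (hc2.sub ((p.continuous.comp hc1).mul (q.continuous.comp hc1)))
  have hu_sq : ∀ t, u t ^ 2 = p.eval (γ₁ t) * q.eval (γ₁ t) ^ 2 := by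
    intro t
    have := hW2 t
    simp only [hu_def]
    nlinarith [hW2 t]
  have hcases : ∀ t, γ₁ t = xe ∨ γ₁ t = xd ∨ γ₁ t ∈ Set.Ioo xe xd := by
    intro t
    rcases eq_or_lt_of_le (hmem t).2.1 with h | h
    · exact Or.inl h.symm
    rcases eq_or_lt_of_le (hmem t).2.2 with h' | h'
    · exact Or.inr (Or.inl h')
    exact Or.inr (Or.inr ⟨h, h'⟩)
  have hune : ∀ t, u t ^ 2 ≠ 1 := by
    intro t
    rcases hcases t with h | h | h
    · rw [hu_sq t, h, hpe]; norm_num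
    · rw [hu_sq t, h, hpd]; norm_num
    · rw [hu_sq t]; exact hpq _ h
  -- a point over xe
  have hxe_pt : ∃ t, γ₁ t = xe ∧ γ₂ t = 0 := by
    have h : ((xe, (0:ℝ))) ∈ Set.range (fun t => (γ₁ t, γ₂ t)) := by
      rw [himage]
      refine ⟨by simp [hpe], le_refl _, le_of_lt (hxe.trans hxd)⟩
    obtain ⟨t, ht⟩ := h
    exact ⟨t, congrArg Prod.fst ht, congrArg Prod.snd ht⟩
  have hu2 : ∀ t, u t ^ 2 < 1 := by
    obtain ⟨t₀, ht₀1, ht₀2⟩ := hxe_pt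
    have hu0 : u t₀ ^ 2 = 0 := by
      rw [hu_sq t₀, ht₀1, hpe]; ring
    intro t
    by_contra hcon
    push_neg at hcon
    have h1 : 1 < u t ^ 2 := lt_of_le_of_ne hcon (Ne.symm (hune t))
    have hcontsq : Continuous (fun s => u s ^ 2) := hu_cont.pow 2
    have := intermediate_value_uIcc (a := t₀) (b := t) (f := fun s => u s ^ 2)
      hcontsq.continuousOn
    have h1mem : (1:ℝ) ∈ Set.uIcc (u t₀ ^ 2) (u t ^ 2) := by
      rw [hu0]
      exact Set.mem_uIcc.2 (Or.inl ⟨by norm_num, le_of_lt h1⟩)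
    obtain ⟨s, _, hs⟩ := this h1mem
    exact hune s hs
  have h1u : ∀ t, 0 < 1 + u t := by
    intro t
    nlinarith [hu2 t, sq_nonneg (1 + u t)]
  -- derivative of u
  have hu' : ∀ t, HasDerivAt u
      ((derivative q).eval (γ₁ t) * γ₂ t * (γ₂ t - p.eval (γ₁ t) * q.eval (γ₁ t))
        + q.eval (γ₁ t) *
          (((((3 / 2) * q.eval (γ₁ t) * (derivative p).eval (γ₁ t)
            + p.eval (γ₁ t) * (derivative q).eval (γ₁ t)) * γ₂ t
            - ((derivative p).eval (γ₁ t) / 2) * (p.eval (γ₁ t) * (q.eval (γ₁ t)) ^ 2 - 1)))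
            - ((derivative p).eval (γ₁ t) * q.eval (γ₁ t)
               + p.eval (γ₁ t) * (derivative q).eval (γ₁ t)) * γ₂ t)) t := by
    intro t
    have hq1 : HasDerivAt (fun s => q.eval (γ₁ s)) ((derivative q).eval (γ₁ t) * γ₂ t) t :=
      (q.hasDerivAt (γ₁ t)).comp t (hsol1 t)
    have hpq1 : HasDerivAt (fun s => (p * q).eval (γ₁ s))
        ((derivative (p * q)).eval (γ₁ t) * γ₂ t) t :=
      ((p * q).hasDerivAt (γ₁ t)).comp t (hsol1 t)
    have hpq2 : HasDerivAt (fun s => p.eval (γ₁ s) * q.eval (γ₁ s))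
        (((derivative p).eval (γ₁ t) * q.eval (γ₁ t)
          + p.eval (γ₁ t) * (derivative q).eval (γ₁ t)) * γ₂ t) t := by
      have : (fun s => p.eval (γ₁ s) * q.eval (γ₁ s)) = fun s => (p * q).eval (γ₁ s) := by
        funext s; rw [eval_mul]
      rw [this]
      convert hpq1 using 1
      rw [derivative_mul, eval_add, eval_mul, eval_mul]
    have hw1 : HasDerivAt (fun s => γ₂ s - p.eval (γ₁ s) * q.eval (γ₁ s))
        ((((3 / 2) * q.eval (γ₁ t) * (derivative p).eval (γ₁ t)
            + p.eval (γ₁ t) * (derivative q).eval (γ₁ t)) * γ₂ t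
            - ((derivative p).eval (γ₁ t) / 2) * (p.eval (γ₁ t) * (q.eval (γ₁ t)) ^ 2 - 1))
          - ((derivative p).eval (γ₁ t) * q.eval (γ₁ t)
             + p.eval (γ₁ t) * (derivative q).eval (γ₁ t)) * γ₂ t) t :=
      (hsol2 t).sub hpq2
    exact hq1.mul hw1
  -- G and its derivative
  have hG : ∀ t, HasDerivAt (fun s => 3 * Real.log (1 + u s))
      (((3 / 2) * q.eval (γ₁ t) * (derivative p).eval (γ₁ t)
        + p.eval (γ₁ t) * (derivative q).eval (γ₁ t))
        + 2 * (p.eval (γ₁ t) * (derivative q).eval (γ₁ t))) t := by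
    intro t
    have h1 : HasDerivAt (fun s => 1 + u s) _ t := (hu' t).const_add 1
    have h2 := (Real.hasDerivAt_log (ne_of_gt (h1u t))).comp t h1
    have h3 := h2.const_mul (3:ℝ)
    refine h3.congr_deriv (Eq.symm ?_)
    have hne : (1 + u t) ≠ 0 := ne_of_gt (h1u t)
    have hid : (3:ℝ) * ((derivative q).eval (γ₁ t) * γ₂ t * (γ₂ t - p.eval (γ₁ t) * q.eval (γ₁ t))
        + q.eval (γ₁ t) *
          (((((3 / 2) * q.eval (γ₁ t) * (derivative p).eval (γ₁ t)
            + p.eval (γ₁ t) * (derivative q).eval (γ₁ t)) * γ₂ t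
            - ((derivative p).eval (γ₁ t) / 2) * (p.eval (γ₁ t) * (q.eval (γ₁ t)) ^ 2 - 1)))
            - ((derivative p).eval (γ₁ t) * q.eval (γ₁ t)
               + p.eval (γ₁ t) * (derivative q).eval (γ₁ t)) * γ₂ t))
        = (1 + u t) * (((3 / 2) * q.eval (γ₁ t) * (derivative p).eval (γ₁ t)
        + p.eval (γ₁ t) * (derivative q).eval (γ₁ t))
        + 2 * (p.eval (γ₁ t) * (derivative q).eval (γ₁ t))) := by
      simp only [hu_def]
      linear_combination (3 * (derivative q).eval (γ₁ t)) * hW2 t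
    rw [eq_comm]
    field_simp
    linear_combination hid + (3 * (derivative q).eval (γ₁ t)) * hW2 t
  -- value of main integral
  have hcontD : Continuous (fun t => (3 / 2) * q.eval (γ₁ t) * (derivative p).eval (γ₁ t)
      + p.eval (γ₁ t) * (derivative q).eval (γ₁ t)) := by
    exact ((continuous_const.mul (q.continuous.comp hc1)).mul
      ((derivative p).continuous.comp hc1)).add
      ((p.continuous.comp hc1).mul ((derivative q).continuous.comp hc1))
  have hcontg : Continuous (fun t => p.eval (γ₁ t) * (derivative q).eval (γ₁ t)) :=
    (p.continuous.comp hc1).mul ((derivative q).continuous.comp hc1)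
  have hFTC : (∫ t in (0:ℝ)..T, (((3 / 2) * q.eval (γ₁ t) * (derivative p).eval (γ₁ t)
        + p.eval (γ₁ t) * (derivative q).eval (γ₁ t))
        + 2 * (p.eval (γ₁ t) * (derivative q).eval (γ₁ t))))
      = 3 * Real.log (1 + u T) - 3 * Real.log (1 + u 0) := by
    exact intervalIntegral.integral_eq_sub_of_hasDerivAt (fun t _ => hG t)
      ((hcontD.add (continuous_const.mul hcontg)).intervalIntegrable 0 T)
  have huper : u T = u 0 := by
    have h1 : γ₁ T = γ₁ 0 := by have := hper1 0; rwa [zero_add] at this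
    have h2 : γ₂ T = γ₂ 0 := by have := hper2 0; rwa [zero_add] at this
    simp only [hu_def, h1, h2]
  rw [huper, sub_self] at hFTC
  have hsplit : (∫ t in (0:ℝ)..T, (((3 / 2) * q.eval (γ₁ t) * (derivative p).eval (γ₁ t)
        + p.eval (γ₁ t) * (derivative q).eval (γ₁ t))
        + 2 * (p.eval (γ₁ t) * (derivative q).eval (γ₁ t))))
      = (∫ t in (0:ℝ)..T, ((3 / 2) * q.eval (γ₁ t) * (derivative p).eval (γ₁ t)
        + p.eval (γ₁ t) * (derivative q).eval (γ₁ t)))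
      + 2 * (∫ t in (0:ℝ)..T, p.eval (γ₁ t) * (derivative q).eval (γ₁ t)) := by
    rw [intervalIntegral.integral_add (g := fun t => 2 * (p.eval (γ₁ t) * (derivative q).eval (γ₁ t))) (hcontD.intervalIntegrable 0 T)
      ((continuous_const.mul hcontg).intervalIntegrable 0 T),
      intervalIntegral.integral_const_mul]
  have hkey : (∫ t in (0:ℝ)..T, ((3 / 2) * q.eval (γ₁ t) * (derivative p).eval (γ₁ t)
        + p.eval (γ₁ t) * (derivative q).eval (γ₁ t)))
      = -2 * (∫ t in (0:ℝ)..T, p.eval (γ₁ t) * (derivative q).eval (γ₁ t)) := by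
    rw [hsplit] at hFTC; linarith
  -- nonnegativity of p along the orbit
  have hPnn : ∀ t, 0 ≤ p.eval (γ₁ t) := fun t => (hW2 t) ▸ sq_nonneg _
  -- a time over x = 0, reduced mod the period to [0, T)
  have h0_pt : ∃ t, γ₁ t = 0 := by
    have hp0 : 0 < p.eval 0 := hp 0 ⟨hxe, hxd⟩
    have h : ((0:ℝ), p.eval 0 * q.eval 0 + Real.sqrt (p.eval 0))
        ∈ Set.range (fun t => (γ₁ t, γ₂ t)) := by
      rw [himage]
      refine ⟨?_, le_of_lt hxe, le_of_lt hxd⟩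
      simp only [Set.mem_setOf_eq]
      rw [add_sub_cancel_left, Real.sq_sqrt hp0.le, sub_self]
    obtain ⟨t, ht⟩ := h
    exact ⟨t, congrArg Prod.fst ht⟩
  have h0T_pt : ∃ t₀, 0 ≤ t₀ ∧ t₀ < T ∧ γ₁ t₀ = 0 := by
    obtain ⟨s, hs⟩ := h0_pt
    refine ⟨s - ⌊s / T⌋ * T, Int.sub_floor_div_mul_nonneg s hT,
      Int.sub_floor_div_mul_lt s hT, ?_⟩
    have hper : Function.Periodic γ₁ T := hper1
    rw [hper.sub_int_mul_eq, hs]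
  obtain ⟨t₀, ht₀0, ht₀T, ht₀⟩ := h0T_pt
  -- sign results for ∫ g
  have hgpos : (∀ x ∈ Set.Ioo xe xd, 0 < (derivative q).eval x) →
      0 < ∫ t in (0:ℝ)..T, p.eval (γ₁ t) * (derivative q).eval (γ₁ t) := by
    intro hq
    refine aux_integral_pos hcontg hT ht₀0 ht₀T ?_ ?_
    · intro t
      rcases hcases t with h | h | h
      · rw [h, hpe]; simp
      · rw [h, hpd]; simp
      · exact le_of_lt (mul_pos (hp _ h) (hq _ h))
    · rw [ht₀]
      exact mul_pos (hp 0 ⟨hxe, hxd⟩) (hq 0 ⟨hxe, hxd⟩)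
  have hgneg : (∀ x ∈ Set.Ioo xe xd, (derivative q).eval x < 0) →
      (∫ t in (0:ℝ)..T, p.eval (γ₁ t) * (derivative q).eval (γ₁ t)) < 0 := by
    intro hq
    have : 0 < ∫ t in (0:ℝ)..T, -(p.eval (γ₁ t) * (derivative q).eval (γ₁ t)) := by
      refine aux_integral_pos (g := fun t => -(p.eval (γ₁ t) * (derivative q).eval (γ₁ t))) hcontg.neg hT ht₀0 ht₀T ?_ ?_
      · intro t
        rcases hcases t with h | h | h
        · rw [h, hpe]; simp
        · rw [h, hpd]; simp
        · simp only [neg_nonneg]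
          exact le_of_lt (mul_neg_of_pos_of_neg (hp _ h) (hq _ h))
      · rw [ht₀]
        simp only [neg_pos]
        exact mul_neg_of_pos_of_neg (hp 0 ⟨hxe, hxd⟩) (hq 0 ⟨hxe, hxd⟩)
    rw [intervalIntegral.integral_neg] at this
    linarith
  -- the sign of q' is constant on (xe, xd)
  have hq'0 : (derivative q).eval 0 ≠ 0 := hq' 0 ⟨hxe, hxd⟩
  have hsign : (0 < (derivative q).eval 0 → ∀ x ∈ Set.Ioo xe xd, 0 < (derivative q).eval x)
      ∧ ((derivative q).eval 0 < 0 → ∀ x ∈ Set.Ioo xe xd, (derivative q).eval x < 0) := by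
    constructor
    · intro hc x hx
      by_contra hcon
      push_neg at hcon
      have hxlt : (derivative q).eval x < 0 := lt_of_le_of_ne hcon (hq' x hx)
      have hsub : Set.uIcc x 0 ⊆ Set.Ioo xe xd :=
        Set.OrdConnected.uIcc_subset Set.ordConnected_Ioo hx ⟨hxe, hxd⟩
      have := intermediate_value_uIcc (a := x) (b := 0)
        (f := fun y => (derivative q).eval y) ((derivative q).continuous.continuousOn)
      have h0mem : (0:ℝ) ∈ Set.uIcc ((derivative q).eval x) ((derivative q).eval 0) :=
        Set.mem_uIcc.2 (Or.inl ⟨le_of_lt hxlt, le_of_lt hc⟩)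
      obtain ⟨y, hy, hy0⟩ := this h0mem
      exact hq' y (hsub hy) hy0
    · intro hc x hx
      by_contra hcon
      push_neg at hcon
      have hxlt : 0 < (derivative q).eval x :=
        lt_of_le_of_ne hcon (Ne.symm (hq' x hx))
      have hsub : Set.uIcc x 0 ⊆ Set.Ioo xe xd :=
        Set.OrdConnected.uIcc_subset Set.ordConnected_Ioo hx ⟨hxe, hxd⟩
      have := intermediate_value_uIcc (a := x) (b := 0)
        (f := fun y => (derivative q).eval y) ((derivative q).continuous.continuousOn)
      have h0mem : (0:ℝ) ∈ Set.uIcc ((derivative q).eval x) ((derivative q).eval 0) :=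
        Set.mem_uIcc.2 (Or.inr ⟨le_of_lt hc, le_of_lt hxlt⟩)
      obtain ⟨y, hy, hy0⟩ := this h0mem
      exact hq' y (hsub hy) hy0
  refine ⟨?_, ?_, ?_⟩
  · rcases lt_or_gt_of_ne hq'0 with hc | hc
    · rw [hkey]
      have := hgneg (hsign.2 hc)
      nlinarith [hgneg (hsign.2 hc)]
    · rw [hkey]
      have := hgpos (hsign.1 hc)
      nlinarith
  · intro hq
    rw [hkey]
    have := hgpos hq
    nlinarith
  · intro hq
    rw [hkey]
    have := hgneg hq
    nlinarith
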